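/- Nyquist–Shannon reconstruction: if f : ℝ → ℝ is bandlimited, then for every x ∈ ℝ the family n ↦ f(n)·sinc(x − n) indexed by n ∈ ℤ is summable and f(x) = ∑_{n∈ℤ} f(n)·sinc(x − n). -/

import Mathlib

open MeasureTheory
open Complex FourierTransform intervalIntegral
open Real hiding sinc

/-- The sinc function: `sinc 0 = 1`, `sinc t = sin (π t) / (π t)` otherwise. -/
noncomputable def sinc (t : ℝ) : ℝ :=
  if t = 0 then 1 else Real.sin (Real.pi * t) / (Real.pi * t)

/-- `f : ℝ → ℝ` is bandlimited (to the band `[−1/2, 1/2]`) if it is continuous,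
integrable, square-integrable, and its Fourier transform
`𝓕f(ξ) = ∫ f(x) e^{−2πi x ξ} dx` vanishes for `|ξ| > 1/2`. -/
def Bandlimited (f : ℝ → ℝ) : Prop :=
  Continuous f ∧ Integrable f ∧ MemLp f 2 ∧
    ∀ ξ : ℝ, 1 / 2 < |ξ| →
      (∫ x : ℝ, (f x : ℂ) * Complex.exp (-2 * Real.pi * Complex.I * x * ξ)) = 0

lemma integral_exp_eq_sinc (t : ℝ) :
    ∫ ξ in (-(1/2) : ℝ)..(-(1/2) + 1), Complex.exp (2 * Real.pi * Complex.I * t * ξ) = (sinc t : ℂ) := by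
  by_cases ht : t = 0
  · simp [ht, sinc]
  · have hc : (2 * Real.pi * Complex.I * t : ℂ) ≠ 0 := by
      simp [Complex.ext_iff, Real.pi_ne_zero, ht]
    have h := integral_exp_mul_complex (a := (-(1/2):ℝ)) (b := (-(1/2)+1)) hc
    rw [h]
    have e1 : (2 * Real.pi * Complex.I * t : ℂ) * ((-(1/2):ℝ) + 1 : ℝ) = ((Real.pi * t : ℝ) : ℂ) * Complex.I := by
      push_cast; ring
    have e2 : (2 * Real.pi * Complex.I * t : ℂ) * ((-(1/2):ℝ) : ℝ) = (-((Real.pi * t : ℝ) : ℂ)) * Complex.I := by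
      push_cast; ring
    rw [e1, e2, Complex.exp_mul_I, Complex.exp_mul_I, Complex.cos_neg, Complex.sin_neg,
      ← Complex.ofReal_sin, ← Complex.ofReal_cos]
    rw [sinc, if_neg ht]
    have hπ : (Real.pi : ℂ) ≠ 0 := Complex.ofReal_ne_zero.mpr Real.pi_ne_zero
    have ht' : (t : ℂ) ≠ 0 := Complex.ofReal_ne_zero.mpr ht
    push_cast
    field_simp
    ring

/-- Nyquist–Shannon reconstruction: a bandlimited function is reconstructed from
its integer samples via sinc interpolation. -/
theorem nyquist_shannon_reconstruction (f : ℝ → ℝ) (hf : Bandlimited f) (x : ℝ) :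
    Summable (fun n : ℤ => f n * sinc (x - n)) ∧
      f x = ∑' n : ℤ, f n * sinc (x - n) := by
  obtain ⟨hc, hi, _hl2, hband⟩ := hf
  haveI hfact : Fact ((0:ℝ) < 1) := ⟨one_pos⟩
  -- the Fourier transform of f
  set F : ℝ → ℂ := fun y => (f y : ℂ) with hF
  have hFc : Continuous F := Complex.continuous_ofReal.comp hc
  have hFi : Integrable F := hi.ofReal
  set g : ℝ → ℂ := 𝓕 F with hg
  have hg_eq : ∀ ξ : ℝ, g ξ = ∫ y : ℝ, F y * Complex.exp (-2 * Real.pi * Complex.I * y * ξ) := by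
    intro ξ
    rw [hg, Real.fourier_real_eq_integral_exp_smul]
    apply MeasureTheory.integral_congr_ae; apply ae_of_all; intro y
    simp only [smul_eq_mul]; rw [mul_comm]
    congr 1; push_cast; ring_nf
  have hg0 : ∀ ξ : ℝ, 1/2 < |ξ| → g ξ = 0 := fun ξ h => by rw [hg_eq]; exact hband ξ h
  have hgc : Continuous g := by
    apply VectorFourier.fourierIntegral_continuous Real.continuous_fourierChar
      (by exact continuous_inner) hFi
  have hsupp : HasCompactSupport g := by
    apply HasCompactSupport.intro (isCompact_Icc : IsCompact (Set.Icc (-(1/2):ℝ) (1/2)))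
    intro ξ hξ
    apply hg0
    simp only [Set.mem_Icc, not_and_or, not_le] at hξ
    rcases hξ with h | h
    · exact lt_abs.mpr (Or.inr (by linarith))
    · exact lt_abs.mpr (Or.inl h)
  have hgi : Integrable g := hgc.integrable_of_hasCompactSupport hsupp
  have hg_half : ∀ ξ : ℝ, ξ ∉ Set.Ioc (-(1/2):ℝ) (-(1/2) + 1) → g ξ = 0 := by
    have hcl : Set.EqOn g 0 (closure {ξ : ℝ | 1/2 < |ξ|}) :=
      Set.EqOn.closure (fun t ht => hg0 t ht) hgc continuous_const
    intro ξ hξ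
    simp only [Set.mem_Ioc, not_and_or, not_lt, not_le] at hξ
    rcases hξ with h | h
    · rcases eq_or_lt_of_le h with heq | hlt
      · apply hcl
        apply closure_mono (show Set.Iio (-(1/2):ℝ) ⊆ {ξ : ℝ | 1/2 < |ξ|} from
          fun t ht => show (1:ℝ)/2 < |t| from lt_abs.mpr (Or.inr (by simp only [Set.mem_Iio] at ht; linarith)))
        rw [closure_Iio]; exact Set.mem_Iic.mpr heq.le
      · exact hg0 ξ (lt_abs.mpr (Or.inr (by linarith)))
    · exact hg0 ξ (lt_abs.mpr (Or.inl (by linarith)))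
  -- Fourier inversion
  have key : ∀ y : ℝ, (f y : ℂ) =
      ∫ ξ in Set.Ioc (-(1/2):ℝ) (-(1/2) + 1), Complex.exp (2 * Real.pi * Complex.I * ξ * y) * g ξ := by
    intro y
    have hinv : 𝓕⁻ g y = F y := hFi.fourierInv_fourier_eq hgi hFc.continuousAt
    have h2 : 𝓕⁻ g y = ∫ ξ : ℝ, Complex.exp (2 * Real.pi * Complex.I * ξ * y) * g ξ := by
      rw [Real.fourierInv_eq_fourier_neg, Real.fourier_real_eq_integral_exp_smul]
      apply MeasureTheory.integral_congr_ae; apply ae_of_all; intro ξ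
      simp only [smul_eq_mul]
      congr 1; push_cast; ring_nf
    rw [show ((f y : ℂ)) = F y from rfl, ← hinv, h2,
      setIntegral_eq_integral_of_forall_compl_eq_zero
        (fun ξ hξ => by rw [hg_half ξ hξ, mul_zero])]
  -- set up L² functions on the circle
  set u : ℝ → ℂ := fun ξ => (starRingEnd ℂ) (g ξ) with hu
  set v : ℝ → ℂ := fun ξ => Complex.exp (2 * Real.pi * Complex.I * ξ * x) with hv
  set U0 : AddCircle (1:ℝ) → ℂ := AddCircle.liftIoc 1 (-(1/2)) u with hU0
  set V0 : AddCircle (1:ℝ) → ℂ := AddCircle.liftIoc 1 (-(1/2)) v with hV0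
  have hliftIoc : ∀ (w : ℝ → ℂ), AddCircle.liftIoc 1 (-(1/2)) w =
      (w ∘ Subtype.val) ∘ (AddCircle.measurableEquivIoc 1 (-(1/2))) := fun w => rfl
  have hU0m : Measurable U0 := by
    rw [hU0, hliftIoc]
    exact ((Complex.continuous_conj.comp hgc).measurable.comp measurable_subtype_coe).comp
      (AddCircle.measurableEquivIoc 1 (-(1/2))).measurable
  have hV0m : Measurable V0 := by
    have hvc : Continuous v := by fun_prop
    rw [hV0, hliftIoc]
    exact (hvc.measurable.comp measurable_subtype_coe).comp
      (AddCircle.measurableEquivIoc 1 (-(1/2))).measurable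
  obtain ⟨t₀, hbound⟩ := hgc.norm.exists_forall_ge_of_hasCompactSupport hsupp.norm
  have hvnorm : ∀ ξ : ℝ, ‖v ξ‖ = 1 := by
    intro ξ
    simp only [hv]
    rw [show (2 * (Real.pi:ℂ) * Complex.I * ξ * x : ℂ) = ((2 * Real.pi * ξ * x : ℝ) : ℂ) * Complex.I
      by push_cast; ring]
    exact Complex.norm_exp_ofReal_mul_I _
  have hUb : ∀ z, ‖U0 z‖ ≤ ‖g t₀‖ := by
    intro z
    rw [hU0, hliftIoc]
    simp only [Function.comp_apply]
    simp only [hu]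
    rw [RingHomIsometric.norm_map]
    exact hbound _
  have hVb : ∀ z, ‖V0 z‖ ≤ 1 := by
    intro z
    rw [hV0, hliftIoc]
    simp only [Function.comp_apply]
    exact le_of_eq (hvnorm _)
  have hU : MemLp U0 2 (@AddCircle.haarAddCircle 1 hfact) :=
    MemLp.of_bound hU0m.aestronglyMeasurable ‖g t₀‖ (ae_of_all _ hUb)
  have hV : MemLp V0 2 (@AddCircle.haarAddCircle 1 hfact) :=
    MemLp.of_bound hV0m.aestronglyMeasurable 1 (ae_of_all _ hVb)
  set U : Lp ℂ 2 (@AddCircle.haarAddCircle 1 hfact) := hU.toLp U0 with hUdef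
  set V : Lp ℂ 2 (@AddCircle.haarAddCircle 1 hfact) := hV.toLp V0 with hVdef
  have hcoeff_congr : ∀ (h₁ h₂ : AddCircle (1:ℝ) → ℂ), h₁ =ᵐ[@AddCircle.haarAddCircle 1 hfact] h₂ →
      ∀ n : ℤ, fourierCoeff h₁ n = fourierCoeff h₂ n := by
    intro h₁ h₂ hh n
    unfold fourierCoeff
    exact MeasureTheory.integral_congr_ae (hh.mono fun z hz => by simp only [hz])
  -- Fourier coefficients of V
  have hVcoeff : ∀ n : ℤ, fourierCoeff (V : AddCircle (1:ℝ) → ℂ) n = ((sinc (x - n) : ℝ) : ℂ) := by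
    intro n
    rw [hcoeff_congr _ _ (hV.coeFn_toLp) n, fourierCoeff_eq_intervalIntegral V0 n (-(1/2))]
    rw [← integral_exp_eq_sinc (x - n)]
    rw [show ((1:ℝ)/(1:ℝ)) = 1 by norm_num, one_smul]
    rw [intervalIntegral.integral_of_le (by norm_num : (-(1/2):ℝ) ≤ -(1/2) + 1),
      intervalIntegral.integral_of_le (by norm_num : (-(1/2):ℝ) ≤ -(1/2) + 1)]
    apply setIntegral_congr_fun measurableSet_Ioc
    intro ξ hξ
    simp only [hV0]
    rw [AddCircle.liftIoc_coe_apply hξ, fourier_coe_apply, smul_eq_mul, hv, ← Complex.exp_add]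
    congr 1; push_cast; ring
  -- Fourier coefficients of U
  have hUcoeff : ∀ n : ℤ, (starRingEnd ℂ) (fourierCoeff (U : AddCircle (1:ℝ) → ℂ) n) = ((f n : ℝ) : ℂ) := by
    intro n
    rw [hcoeff_congr _ _ (hU.coeFn_toLp) n, fourierCoeff_eq_intervalIntegral U0 n (-(1/2))]
    rw [show ((1:ℝ)/(1:ℝ)) = 1 by norm_num, one_smul]
    rw [key (n : ℝ)]
    rw [intervalIntegral.integral_of_le (by norm_num : (-(1/2):ℝ) ≤ -(1/2) + 1)]
    rw [← integral_conj]
    apply setIntegral_congr_fun measurableSet_Ioc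
    intro ξ hξ
    simp only [hU0]
    rw [AddCircle.liftIoc_coe_apply hξ, fourier_coe_apply, smul_eq_mul, hu]
    simp only []
    rw [map_mul, Complex.conj_conj, ← Complex.exp_conj]
    congr 1
    simp only [map_div₀, map_mul, Complex.conj_I, map_ofNat, Complex.conj_ofReal, map_one,
      map_intCast, map_neg]
    push_cast
    ring_nf
  -- the inner product of U and V
  have hUV : (inner ℂ U V : ℂ) = ((f x : ℝ) : ℂ) := by
    rw [MeasureTheory.L2.inner_def]
    have h1 : (∫ z, (inner ℂ (U z) (V z) : ℂ) ∂(@AddCircle.haarAddCircle 1 hfact))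
        = ∫ z, (starRingEnd ℂ) (U0 z) * V0 z ∂(@AddCircle.haarAddCircle 1 hfact) := by
      apply MeasureTheory.integral_congr_ae
      filter_upwards [hU.coeFn_toLp, hV.coeFn_toLp] with z h1 h2
      rw [h1, h2, RCLike.inner_apply, mul_comm]
    rw [h1]
    have hvol : (volume : Measure (AddCircle (1:ℝ))) = (@AddCircle.haarAddCircle 1 hfact) := by
      rw [AddCircle.volume_eq_smul_haarAddCircle]; simp
    rw [← hvol]
    rw [← AddCircle.integral_preimage (1:ℝ) (-(1/2)) (fun z => (starRingEnd ℂ) (U0 z) * V0 z)]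
    rw [key x]
    apply setIntegral_congr_fun measurableSet_Ioc
    intro ξ hξ
    simp only [hU0, hV0]
    rw [AddCircle.liftIoc_coe_apply hξ, AddCircle.liftIoc_coe_apply hξ]
    simp only [hu, hv, Complex.conj_conj]
    ring
  -- now apply Parseval via the Hilbert basis
  set b := @fourierBasis 1 hfact with hb
  have hterm : ∀ n : ℤ, (inner ℂ U (b n) : ℂ) * (inner ℂ (b n) V : ℂ)
      = ((f n * sinc (x - n) : ℝ) : ℂ) := by
    intro n
    have h₁ : (inner ℂ (b n) U : ℂ) = fourierCoeff (U : AddCircle (1:ℝ) → ℂ) n := by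
      rw [← b.repr_apply_apply, hb, fourierBasis_repr]
    have h₂ : (inner ℂ U (b n) : ℂ) = ((f n : ℝ) : ℂ) := by
      rw [← inner_conj_symm, h₁]; exact hUcoeff n
    have h₃ : (inner ℂ (b n) V : ℂ) = ((sinc (x - n) : ℝ) : ℂ) := by
      rw [← b.repr_apply_apply, hb, fourierBasis_repr]; exact hVcoeff n
    rw [h₂, h₃]
    push_cast
    ring
  have hsumC : Summable (fun n : ℤ => ((f n * sinc (x - n) : ℝ) : ℂ)) := by
    have := b.summable_inner_mul_inner U V
    simpa only [hterm] using this
  have hsum : Summable (fun n : ℤ => f n * sinc (x - n)) :=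
    (RCLike.summable_ofReal ℂ).mp hsumC
  refine ⟨hsum, ?_⟩
  have htsumC := b.tsum_inner_mul_inner U V
  rw [hUV] at htsumC
  simp only [hterm] at htsumC
  rw [← Complex.ofReal_tsum] at htsumC
  exact (Complex.ofReal_inj.mp htsumC).symm
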